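/- Let $n \ge 1$, let $A_{Q_n}$ be the adjacency matrix of the hypercube $Q_n$, and let $\psi_t = \exp(-itA_{Q_n})\delta_{0_n}$ with $P_t(x) = |\psi_t(x)|^2$. Then for every $a \in \mathbb{Z}_2^n$ and every $t \in \mathbb{R}$, the Fourier coefficient of the probability distribution satisfies $\sum_{x \in \mathbb{Z}_2^n} P_t(x)\,(-1)^{a \cdot x} = (\cos 2t)^{|a|}$. -/

import Mathlib

open Matrix Complex Finset Kronecker

/-- Hamming weight of a vector in `(ZMod 2)^n`. -/
def wt {n : ℕ} (x : Fin n → ZMod 2) : ℕ := (Finset.univ.filter fun i => x i = 1).card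

/-- Inner product modulo 2. -/
def dot {n : ℕ} (a x : Fin n → ZMod 2) : ZMod 2 := ∑ i, a i * x i

/-- Adjacency matrix of the hypercube `Q_n`: `A[x,y] = 1` iff `|x ⊕ y| = 1`. -/
def adjQ (n : ℕ) : Matrix (Fin n → ZMod 2) (Fin n → ZMod 2) ℂ :=
  Matrix.of fun x y => if wt (x + y) = 1 then 1 else 0

/-- Continuous-time quantum walk `ψ_t = exp(-itA) ψ₀`. -/
noncomputable def walk {V : Type*} [Fintype V] [DecidableEq V]
    (A : Matrix V V ℂ) (ψ0 : V → ℂ) (t : ℝ) : V → ℂ :=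
  (NormedSpace.exp ((-(t : ℂ) * Complex.I) • A)).mulVec ψ0

/-! ### Auxiliary lemmas -/

/-- The complex character of `ZMod 2`. -/
def chC (u : ZMod 2) : ℂ := (-1) ^ u.val

/-- The real character of `ZMod 2`. -/
def chR (u : ZMod 2) : ℝ := (-1) ^ u.val

lemma zmod2_cases (u : ZMod 2) : u = 0 ∨ u = 1 := by revert u; decide

lemma zmod2_univ : (Finset.univ : Finset (ZMod 2)) = {0, 1} := by decide

lemma val11 : ((1 + 1 : ZMod 2)).val = 0 := rfl

lemma chC_add (u v : ZMod 2) : chC (u + v) = chC u * chC v := by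
  rcases zmod2_cases u with h | h <;> rcases zmod2_cases v with h' | h' <;>
    subst h <;> subst h' <;>
    norm_num [chC, val11, show (1:ZMod 2).val = 1 from rfl, show (2:ZMod 2).val = 0 from rfl]

lemma chR_add (u v : ZMod 2) : chR (u + v) = chR u * chR v := by
  rcases zmod2_cases u with h | h <;> rcases zmod2_cases v with h' | h' <;>
    subst h <;> subst h' <;>
    norm_num [chR, val11, show (1:ZMod 2).val = 1 from rfl, show (2:ZMod 2).val = 0 from rfl]

lemma chC_sum {ι : Type*} (s : Finset ι) (f : ι → ZMod 2) :
    chC (∑ i ∈ s, f i) = ∏ i ∈ s, chC (f i) := by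
  induction s using Finset.cons_induction with
  | empty => simp [chC]
  | cons i s hi ih => rw [Finset.sum_cons, Finset.prod_cons, chC_add, ih]

lemma chR_sum {ι : Type*} (s : Finset ι) (f : ι → ZMod 2) :
    chR (∑ i ∈ s, f i) = ∏ i ∈ s, chR (f i) := by
  induction s using Finset.cons_induction with
  | empty => simp [chR]
  | cons i s hi ih => rw [Finset.sum_cons, Finset.prod_cons, chR_add, ih]

lemma wt_eq_sum_val {n : ℕ} (s : Fin n → ZMod 2) : (wt s : ℕ) = ∑ i, (s i).val := by
  rw [wt, Finset.card_filter]
  refine Finset.sum_congr rfl fun i _ => ?_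
  rcases zmod2_cases (s i) with h | h <;> rw [h] <;> rfl

lemma dot_single {n : ℕ} (s : Fin n → ZMod 2) (k : Fin n) :
    dot s (Pi.single k 1) = s k := by
  simp [dot, Pi.single_apply, mul_ite, Finset.sum_ite_eq']

lemma dot_add {n : ℕ} (s x y : Fin n → ZMod 2) : dot s (x + y) = dot s x + dot s y := by
  simp [dot, mul_add, Finset.sum_add_distrib]

lemma wt_single {n : ℕ} (k : Fin n) : wt (Pi.single k (1 : ZMod 2)) = 1 := by
  rw [wt]
  convert Finset.card_singleton k
  ext i
  simp [Pi.single_apply]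

lemma chC_eq (u : ZMod 2) : chC u = 1 - 2 * (u.val : ℂ) := by
  rcases zmod2_cases u with h | h <;> subst h <;>
    norm_num [chC, show (1 : ZMod 2).val = 1 from rfl]

lemma pi_add_self {n : ℕ} (x : Fin n → ZMod 2) : x + x = 0 := by
  funext i
  have : ∀ u : ZMod 2, u + u = 0 := by decide
  exact this (x i)

lemma add_eq_iff {n : ℕ} (x y z : Fin n → ZMod 2) : x + y = z ↔ y = x + z := by
  constructor
  · rintro rfl; rw [← add_assoc, pi_add_self, zero_add]
  · rintro rfl; rw [← add_assoc, pi_add_self, zero_add]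

lemma wt_one_iff {n : ℕ} (z : Fin n → ZMod 2) (h : wt z = 1) : ∃ k, z = Pi.single k 1 := by
  obtain ⟨k, hk⟩ := Finset.card_eq_one.mp h
  refine ⟨k, funext fun i => ?_⟩
  have hmem : ∀ i : Fin n, z i = 1 ↔ i = k := by
    intro i
    constructor
    · intro hi
      have : i ∈ Finset.univ.filter fun j => z j = 1 := by simp [hi]
      rw [hk] at this; simpa using this
    · intro hi
      subst hi
      have : i ∈ Finset.univ.filter fun j => z j = 1 := by rw [hk]; simp
      simpa using this
  rw [Pi.single_apply]
  by_cases hik : i = k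
  · simp only [if_pos hik]
    subst hik
    exact (hmem i).mpr rfl
  · simp [hik]
    rcases zmod2_cases (z i) with h' | h'
    · exact h'
    · exact absurd (hmem i |>.mp h') hik

lemma adj_entry {n : ℕ} (z : Fin n → ZMod 2) :
    (if wt z = 1 then (1 : ℂ) else 0) = ∑ k : Fin n, if z = Pi.single k 1 then 1 else 0 := by
  by_cases h : wt z = 1
  · obtain ⟨k0, rfl⟩ := wt_one_iff z h
    rw [if_pos h]
    have : ∀ k : Fin n, ((Pi.single k0 1 : Fin n → ZMod 2) = Pi.single k 1) ↔ k = k0 := by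
      intro k
      constructor
      · intro he
        have h0 := congr_fun he k0
        by_contra hne
        rw [Pi.single_eq_same, Pi.single_apply, if_neg (fun hh => hne hh.symm)] at h0
        exact one_ne_zero h0
      · rintro rfl; rfl
    rw [Finset.sum_congr rfl fun k _ => if_congr (this k) rfl rfl]
    simp
  · rw [if_neg h]
    refine (Finset.sum_eq_zero fun k _ => ?_).symm
    rw [if_neg]
    rintro rfl
    exact h (wt_single k)

lemma adj_mulVec_chi {n : ℕ} (s : Fin n → ZMod 2) :
    (adjQ n).mulVec (fun x => chC (dot s x))
      = ((n : ℂ) - 2 * (wt s : ℂ)) • (fun x => chC (dot s x)) := by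
  funext x
  show ∑ y, adjQ n x y * chC (dot s y) = _
  have h1 : ∀ y, adjQ n x y = if wt (x + y) = 1 then (1:ℂ) else 0 := fun _ => rfl
  simp_rw [h1, adj_entry, Finset.sum_mul, ite_mul, one_mul, zero_mul]
  rw [Finset.sum_comm]
  have h2 : ∀ k : Fin n, ∀ y, (x + y = Pi.single k 1) = (y = x + Pi.single k 1) := by
    intro k y; exact propext (add_eq_iff x y _)
  simp_rw [h2, Finset.sum_ite_eq' Finset.univ, Finset.mem_univ, if_pos]
  simp_rw [dot_add, chC_add, dot_single, ← Finset.mul_sum]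
  have h3 : ∑ k : Fin n, chC (s k) = (n : ℂ) - 2 * (wt s : ℂ) := by
    simp_rw [chC_eq]
    rw [Finset.sum_sub_distrib, Finset.sum_const, Finset.card_univ, ← Finset.mul_sum]
    have : ((wt s : ℕ) : ℂ) = ∑ i, ((s i).val : ℂ) := by
      rw [wt_eq_sum_val]; push_cast; ring
    simp [this, nsmul_eq_mul]
  rw [h3, Pi.smul_apply, smul_eq_mul, mul_comm]

attribute [local instance] Matrix.linftyOpNormedAddCommGroup Matrix.linftyOpNormedRing
  Matrix.linftyOpNormedAlgebra

lemma exp_mulVec_eigen {V : Type*} [Fintype V] [DecidableEq V]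
    (A : Matrix V V ℂ) (v : V → ℂ) (μ : ℂ) (h : A.mulVec v = μ • v) :
    (NormedSpace.exp A).mulVec v = Complex.exp μ • v := by
  have hpow : ∀ k : ℕ, (A ^ k).mulVec v = μ ^ k • v := by
    intro k
    induction k with
    | zero => simp
    | succ k ih =>
      rw [pow_succ, ← Matrix.mulVec_mulVec, h, Matrix.mulVec_smul, ih, smul_smul, pow_succ]
      ring_nf
  let L : Matrix V V ℂ →ₗ[ℂ] (V → ℂ) :=
    { toFun := fun M => M.mulVec v
      map_add' := fun M N => Matrix.add_mulVec M N v
      map_smul' := fun c M => (Matrix.smul_mulVec c M v) }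
  let Lc : Matrix V V ℂ →L[ℂ] (V → ℂ) := LinearMap.toContinuousLinearMap L
  have : (NormedSpace.exp A).mulVec v = Lc (NormedSpace.exp A) := rfl
  rw [this, NormedSpace.exp_eq_tsum ℂ]
  rw [Lc.map_tsum (NormedSpace.expSeries_summable' (𝕂 := ℂ) A)]
  have h2 : ∀ k : ℕ, Lc ((k.factorial⁻¹ : ℂ) • A ^ k) = ((k.factorial⁻¹ : ℂ) * μ ^ k) • v := by
    intro k
    show ((k.factorial⁻¹ : ℂ) • A ^ k).mulVec v = _
    rw [Matrix.smul_mulVec, hpow, smul_smul]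
  simp_rw [h2]
  have hsum : Summable fun k : ℕ => (k.factorial⁻¹ : ℂ) * μ ^ k :=
    (NormedSpace.expSeries_summable' (𝕂 := ℂ) μ).congr (fun k => smul_eq_mul ..)
  rw [hsum.tsum_smul_const]
  congr 1
  rw [Complex.exp_eq_exp_ℂ, NormedSpace.exp_eq_tsum ℂ]
  exact (tsum_congr fun k => smul_eq_mul ..).symm

lemma sum_prod_pi {n : ℕ} {β : Type*} [CommSemiring β] (f : Fin n → ZMod 2 → β) :
    ∑ x : Fin n → ZMod 2, ∏ i, f i (x i) = ∏ i, ∑ b : ZMod 2, f i b := by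
  rw [Finset.prod_univ_sum, Fintype.piFinset_univ]

lemma sum_zmod2 {β : Type*} [AddCommMonoid β] (f : ZMod 2 → β) :
    ∑ b : ZMod 2, f b = f 0 + f 1 := by
  rw [zmod2_univ, Finset.sum_insert (by decide), Finset.sum_singleton]

lemma sum_chi {n : ℕ} (x : Fin n → ZMod 2) :
    ∑ s : Fin n → ZMod 2, chC (dot s x) = if x = 0 then (2 : ℂ) ^ n else 0 := by
  have h1 : ∀ s : Fin n → ZMod 2, chC (dot s x) = ∏ i, chC (s i * x i) := by
    intro s; rw [dot, chC_sum]
  simp_rw [h1]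
  rw [sum_prod_pi (fun i b => chC (b * x i))]
  have h2 : ∀ i, ∑ b : ZMod 2, chC (b * x i) = 1 + chC (x i) := by
    intro i; rw [sum_zmod2, zero_mul, one_mul]; rfl
  simp_rw [h2]
  by_cases hx : x = 0
  · subst hx
    simp [chC, show ((0:ZMod 2)).val = 0 from rfl]
    norm_num
  · rw [if_neg hx]
    obtain ⟨i, hi⟩ : ∃ i, x i ≠ 0 := by
      by_contra hc
      push_neg at hc
      exact hx (funext hc)
    refine Finset.prod_eq_zero (Finset.mem_univ i) ?_
    rcases zmod2_cases (x i) with h | h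
    · exact absurd h hi
    · rw [h]; norm_num [chC, show ((1:ZMod 2)).val = 1 from rfl]

lemma walk_apply (n : ℕ) (t : ℝ) (x : Fin n → ZMod 2) :
    walk (adjQ n) (Pi.single (0 : Fin n → ZMod 2) 1) t x
      = ∏ i, ((Complex.exp (-(t:ℂ) * Complex.I)
          + Complex.exp ((t:ℂ) * Complex.I) * chC (x i)) / 2) := by
  classical
  set c : ℂ := -(t:ℂ) * Complex.I with hc
  have hdelta : (Pi.single (0 : Fin n → ZMod 2) 1 : (Fin n → ZMod 2) → ℂ)
      = ((2:ℂ)^n)⁻¹ • ∑ s : Fin n → ZMod 2, (fun y => chC (dot s y)) := by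
    funext y
    rw [Pi.smul_apply, Finset.sum_apply]
    rw [sum_chi]
    rw [Pi.single_apply]
    by_cases hy : y = 0
    · subst hy; simp
    · simp [hy]
  have heig : ∀ s : Fin n → ZMod 2,
      (NormedSpace.exp (c • adjQ n)).mulVec (fun y => chC (dot s y))
        = Complex.exp (c * ((n:ℂ) - 2*(wt s:ℂ))) • (fun y => chC (dot s y)) := by
    intro s
    apply exp_mulVec_eigen
    rw [Matrix.smul_mulVec, adj_mulVec_chi, smul_smul]
  have hw : walk (adjQ n) (Pi.single (0 : Fin n → ZMod 2) 1) t
      = (NormedSpace.exp (c • adjQ n)).mulVec (Pi.single 0 1) := rfl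
  rw [hw, hdelta, Matrix.mulVec_smul]
  have hsum : (NormedSpace.exp (c • adjQ n)).mulVec
        (∑ s : Fin n → ZMod 2, (fun y => chC (dot s y)))
      = ∑ s : Fin n → ZMod 2,
          (NormedSpace.exp (c • adjQ n)).mulVec (fun y => chC (dot s y)) := by
    simp_rw [← Matrix.mulVecLin_apply]
    exact map_sum _ _ _
  rw [hsum]
  simp_rw [heig]
  rw [Pi.smul_apply, Finset.sum_apply]
  simp_rw [Pi.smul_apply, smul_eq_mul]
  have hfac : ∀ s : Fin n → ZMod 2,
      Complex.exp (c * ((n:ℂ) - 2*(wt s:ℂ))) * chC (dot s x)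
        = ∏ i, (Complex.exp (c * (1 - 2*((s i).val:ℂ))) * chC (s i * x i)) := by
    intro s
    have hv : ((wt s : ℕ) : ℂ) = ∑ i, ((s i).val : ℂ) := by
      rw [wt_eq_sum_val]; push_cast; ring
    have hl : c * ((n:ℂ) - 2*(wt s:ℂ)) = ∑ i, c * (1 - 2*((s i).val:ℂ)) := by
      rw [← Finset.mul_sum]
      congr 1
      rw [Finset.sum_sub_distrib, Finset.sum_const, Finset.card_univ, Fintype.card_fin,
        ← Finset.mul_sum, ← hv]
      simp [nsmul_eq_mul]
    rw [hl, Complex.exp_sum, dot, chC_sum, ← Finset.prod_mul_distrib]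
  simp_rw [hfac]
  rw [sum_prod_pi (fun i b => Complex.exp (c * (1 - 2*((b:ZMod 2).val:ℂ))) * chC (b * x i))]
  have hfac2 : ∀ i, ∑ b : ZMod 2, Complex.exp (c * (1 - 2*((b:ZMod 2).val:ℂ))) * chC (b * x i)
      = Complex.exp (-(t:ℂ) * Complex.I) + Complex.exp ((t:ℂ) * Complex.I) * chC (x i) := by
    intro i
    rw [sum_zmod2]
    have b0 : ((0:ZMod 2)).val = 0 := rfl
    have b1 : ((1:ZMod 2)).val = 1 := rfl
    rw [b0, b1, zero_mul, one_mul]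
    have : chC 0 = 1 := rfl
    rw [this, mul_one]
    congr 1
    · congr 1; rw [hc]; push_cast; ring
    · congr 2; rw [hc]; push_cast; ring
  simp_rw [hfac2]
  rw [Finset.prod_div_distrib, Finset.prod_const, Finset.card_univ, Fintype.card_fin]
  field_simp
  simp_rw [hc, neg_mul]

/-- The Fourier coefficients of the probability distribution of the quantum
walk on `Q_n` started at `0_n` satisfy `P̂_t(a) = (cos 2t)^{|a|}`. -/
theorem hypercube_prob_fourier (n : ℕ) (hn : 1 ≤ n)
    (a : Fin n → ZMod 2) (t : ℝ) :
    ∑ x : Fin n → ZMod 2,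
        ‖walk (adjQ n) (Pi.single (0 : Fin n → ZMod 2) 1) t x‖ ^ 2
          * (-1 : ℝ) ^ (dot a x).val
      = Real.cos (2 * t) ^ wt a := by
  classical
  have e1 : Complex.exp ((t:ℂ) * Complex.I)
      = Complex.cos (t:ℂ) + Complex.sin (t:ℂ) * Complex.I := Complex.exp_mul_I _
  have e2 : Complex.exp (-(t:ℂ) * Complex.I)
      = Complex.cos (t:ℂ) - Complex.sin (t:ℂ) * Complex.I := by
    have := Complex.exp_mul_I (x := -(t:ℂ))
    rw [Complex.cos_neg, Complex.sin_neg] at this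
    rw [this]; ring
  set g : ZMod 2 → ℂ := fun b =>
    (Complex.exp (-(t:ℂ) * Complex.I) + Complex.exp ((t:ℂ) * Complex.I) * chC b) / 2 with hg
  have g0 : g 0 = ((Real.cos t : ℝ) : ℂ) := by
    rw [hg]; simp only [show chC 0 = 1 from rfl]
    rw [e1, e2, Complex.ofReal_cos]; ring
  have g1 : g 1 = -(((Real.sin t : ℝ) : ℂ) * Complex.I) := by
    rw [hg]; simp only [show chC 1 = -1 by norm_num [chC, show (1:ZMod 2).val = 1 from rfl]]
    rw [e1, e2, Complex.ofReal_sin]; ring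
  have ag0 : ‖g 0‖ ^ 2 = Real.cos t ^ 2 := by
    rw [g0, Complex.norm_real, Real.norm_eq_abs, _root_.sq_abs]
  have ag1 : ‖g 1‖ ^ 2 = Real.sin t ^ 2 := by
    rw [g1]
    rw [norm_neg, norm_mul, Complex.norm_I, Complex.norm_real, mul_one, Real.norm_eq_abs, _root_.sq_abs]
  have hterm : ∀ x : Fin n → ZMod 2,
      ‖walk (adjQ n) (Pi.single (0 : Fin n → ZMod 2) 1) t x‖ ^ 2
          * (-1 : ℝ) ^ (dot a x).val
        = ∏ i, (‖g (x i)‖ ^ 2 * chR (a i * x i)) := by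
    intro x
    rw [walk_apply]
    rw [show ∏ i, ((Complex.exp (-(t:ℂ) * Complex.I)
          + Complex.exp ((t:ℂ) * Complex.I) * chC (x i)) / 2) = ∏ i, g (x i) from rfl]
    rw [norm_prod, ← Finset.prod_pow]
    have : (-1 : ℝ) ^ (dot a x).val = chR (dot a x) := rfl
    rw [this, dot, chR_sum, ← Finset.prod_mul_distrib]
  simp_rw [hterm]
  rw [sum_prod_pi (fun i b => ‖g b‖ ^ 2 * chR (a i * b))]
  have hfac : ∀ i, ∑ b : ZMod 2, ‖g b‖ ^ 2 * chR (a i * b)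
      = if a i = 1 then Real.cos (2 * t) else 1 := by
    intro i
    rw [sum_zmod2, mul_zero, mul_one, ag0, ag1]
    have : chR 0 = 1 := rfl
    rw [this, mul_one]
    rcases zmod2_cases (a i) with h | h
    · rw [h, if_neg (by decide)]
      rw [show chR 0 = 1 from rfl, mul_one]
      rw [add_comm]
      exact Real.sin_sq_add_cos_sq t
    · rw [h, if_pos rfl]
      rw [show chR 1 = -1 by norm_num [chR, show (1:ZMod 2).val = 1 from rfl]]
      rw [Real.cos_two_mul']
      ring
  simp_rw [hfac]
  rw [Finset.prod_ite, Finset.prod_const, Finset.prod_const_one, mul_one]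
  rfl
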